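/- Let n be a positive integer, let w ∈ ℝⁿ have all nonzero components, and let z be a real number. Then vol_n(G_{w,z}ⁿ ∩ Iⁿ) = (1/(n! ∏_{i=1}^n wᵢ)) Σ_{K ⊆ [n]} (-1)^{|K|} (z − w·1_K)₊ⁿ. -/

import Mathlib

open MeasureTheory Finset

lemma maxpow_hasDerivAt (m : ℕ) (hm : 1 ≤ m) (y : ℝ) :
    HasDerivAt (fun y : ℝ => (max y 0) ^ (m + 1)) (((m : ℝ) + 1) * (max y 0) ^ m) y := by
  rcases lt_trichotomy y 0 with h | h | h
  · have : ((m : ℝ) + 1) * (max y 0) ^ m = 0 := by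
      rw [max_eq_right h.le, zero_pow (by omega)]; ring
    rw [this]
    apply (hasDerivAt_const y (0:ℝ)).congr_of_eventuallyEq
    filter_upwards [Iio_mem_nhds h] with x hx
    rw [max_eq_right (le_of_lt hx), zero_pow (by omega)]
  · subst h
    have : ((m : ℝ) + 1) * (max (0:ℝ) 0) ^ m = 0 := by
      rw [max_self, zero_pow (by omega)]; ring
    rw [this]
    rw [hasDerivAt_iff_tendsto_slope]
    apply squeeze_zero_norm (a := fun h : ℝ => |h| ^ m)
    · intro x
      rw [slope_def_field]
      simp only [max_self, zero_pow (by omega : m + 1 ≠ 0), sub_zero]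
      rcases eq_or_ne x 0 with rfl | hx
      · simp [zero_pow (by omega : m ≠ 0)]
      · rw [div_eq_mul_inv, Real.norm_eq_abs, abs_mul, abs_pow, abs_inv]
        have h1 : |max x 0| ≤ |x| := by
          rcases le_total x 0 with h' | h'
          · rw [max_eq_right h']; simp
          · rw [max_eq_left h']
        calc |max x 0| ^ (m+1) * |x|⁻¹ ≤ |x| ^ (m+1) * |x|⁻¹ := by
              gcongr
          _ = |x| ^ m := by
              field_simp [abs_ne_zero.mpr hx]; ring
    · have : Filter.Tendsto (fun h : ℝ => |h| ^ m) (nhds 0) (nhds 0) := by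
        have := ((continuous_abs.pow m).tendsto (0:ℝ))
        have h2 : Filter.Tendsto (abs ^ m : ℝ → ℝ) (nhds 0) (nhds 0) := by
          simpa [zero_pow (by omega : m ≠ 0)] using this
        exact h2
      exact this.mono_left nhdsWithin_le_nhds
  · have heq : ((m : ℝ) + 1) * (max y 0) ^ m = ((m : ℝ) + 1) * y ^ m := by
      rw [max_eq_left h.le]
    rw [heq]
    have := hasDerivAt_pow (m + 1) y
    simp only [Nat.cast_add, Nat.cast_one, Nat.add_sub_cancel] at this
    apply this.congr_of_eventuallyEq
    filter_upwards [Ioi_mem_nhds h] with x hx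
    rw [max_eq_left (le_of_lt hx)]

lemma integral_maxpow (m : ℕ) (hm : 1 ≤ m) (w0 d : ℝ) (hw : w0 ≠ 0) :
    ∫ t in (0:ℝ)..1, (max (d - w0 * t) 0) ^ m =
      ((max d 0) ^ (m + 1) - (max (d - w0) 0) ^ (m + 1)) / (((m : ℝ) + 1) * w0) := by
  have hF : ∀ t : ℝ, HasDerivAt
      (fun t : ℝ => -(1 / (((m : ℝ) + 1) * w0)) * (max (d - w0 * t) 0) ^ (m + 1))
      ((max (d - w0 * t) 0) ^ m) t := by
    intro t
    have h1 : HasDerivAt (fun t : ℝ => d - w0 * t) (-w0) t := by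
      exact ((hasDerivAt_const t d).sub ((hasDerivAt_id t).const_mul w0)).congr_deriv (by ring)
    have h2 := (maxpow_hasDerivAt m hm (d - w0 * t)).comp t h1
    have h3 := h2.const_mul (-(1 / (((m : ℝ) + 1) * w0)))
    refine h3.congr_deriv ?_
    have hm1 : ((m : ℝ) + 1) ≠ 0 := by positivity
    field_simp

  have hcont : ContinuousOn (fun t : ℝ => (max (d - w0 * t) 0) ^ m) (Set.uIcc 0 1) :=
    (((continuous_const.sub (continuous_const.mul continuous_id)).max continuous_const).pow
      m).continuousOn
  rw [intervalIntegral.integral_eq_sub_of_hasDerivAt (fun t _ => hF t)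
    (hcont.intervalIntegrable)]
  have hm1 : ((m : ℝ) + 1) ≠ 0 := by positivity
  field_simp
  ring

lemma filter_map_eq_of_subset {α γ : Type*} [DecidableEq α] [DecidableEq γ]
    (e : α ↪ γ) (s : Finset α) (t : Finset γ) (hts : t ⊆ s.map e) :
    (s.filter (fun a => e a ∈ t)).map e = t := by
  ext b
  simp only [mem_map, mem_filter]
  constructor
  · rintro ⟨a, ⟨_, hat⟩, rfl⟩; exact hat
  · intro hb
    obtain ⟨a, has, rfl⟩ := mem_map.1 (hts hb)
    exact ⟨a, ⟨has, hb⟩, rfl⟩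

lemma sum_powerset_map {α γ β : Type*} [DecidableEq α] [DecidableEq γ] [AddCommMonoid β]
    (e : α ↪ γ) (s : Finset α) (f : Finset γ → β) :
    ∑ t ∈ (s.map e).powerset, f t = ∑ t ∈ s.powerset, f (t.map e) := by
  refine Finset.sum_bij' (fun t _ => s.filter (fun a => e a ∈ t)) (fun u _ => u.map e)
    ?_ ?_ ?_ ?_ ?_
  · intro t ht; exact mem_powerset.2 (filter_subset _ _)
  · intro u hu; exact mem_powerset.2 (map_subset_map.2 (mem_powerset.1 hu))
  · intro t ht
    exact filter_map_eq_of_subset e s t (mem_powerset.1 ht)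
  · intro u hu
    have hus := mem_powerset.1 hu
    ext a
    simp only [mem_filter, mem_map]
    constructor
    · rintro ⟨has, a', ha'u, ha'⟩
      rwa [← e.injective ha']
    · intro hau; exact ⟨hus hau, a, hau, rfl⟩
  · intro t ht
    rw [filter_map_eq_of_subset e s t (mem_powerset.1 ht)]

lemma univ_fin_succ_eq (n : ℕ) :
    (univ : Finset (Fin (n + 1))) = insert (Fin.last n) (univ.map Fin.castSuccEmb) := by
  ext i
  simp only [mem_univ, mem_insert, mem_map, Fin.coe_castSuccEmb, true_iff]
  rcases Fin.eq_castSucc_or_eq_last i with ⟨j, rfl⟩ | rfl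
  · exact Or.inr ⟨j, trivial, rfl⟩
  · exact Or.inl rfl

lemma last_not_mem_map (n : ℕ) : Fin.last n ∉ (univ : Finset (Fin n)).map Fin.castSuccEmb := by
  simp only [mem_map, Fin.coe_castSuccEmb, not_exists]
  rintro j ⟨_, hj⟩
  exact absurd hj (Fin.castSucc_lt_last j).ne

lemma sum_finset_fin_split {β : Type*} [AddCommMonoid β] (n : ℕ) (f : Finset (Fin (n + 1)) → β) :
    ∑ K : Finset (Fin (n + 1)), f K =
      ∑ K : Finset (Fin n),
        (f (K.map Fin.castSuccEmb) + f (insert (Fin.last n) (K.map Fin.castSuccEmb))) := by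
  rw [← Finset.powerset_univ, univ_fin_succ_eq n,
    Finset.sum_powerset_insert (last_not_mem_map n), sum_powerset_map, sum_powerset_map,
    Finset.powerset_univ, ← Finset.sum_add_distrib]

lemma base_real (w0 z : ℝ) (hw : w0 ≠ 0) :
    (volume ({t : ℝ | w0 * t ≤ z} ∩ Set.Icc 0 1)).toReal =
      (max z 0 - max (z - w0) 0) / w0 := by
  rcases hw.lt_or_gt with hneg | hpos
  · have hset : {t : ℝ | w0 * t ≤ z} ∩ Set.Icc 0 1 = Set.Icc (max 0 (z / w0)) 1 := by
      have h1 : {t : ℝ | w0 * t ≤ z} = Set.Ici (z / w0) := by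
        ext t; simp only [Set.mem_setOf_eq, Set.mem_Ici]
        rw [div_le_iff_of_neg hneg, mul_comm]
      rw [h1, ← Set.Ici_inter_Iic, Set.inter_comm, Set.inter_assoc,
        Set.inter_comm (Set.Iic (1:ℝ)), ← Set.inter_assoc, Set.Ici_inter_Ici]
      exact Set.Ici_inter_Iic
    rw [hset, Real.volume_Icc, ENNReal.toReal_ofReal']
    rcases le_total 0 z with hz | hz
    · have h0 : z / w0 ≤ 0 := div_nonpos_of_nonneg_of_nonpos hz hneg.le
      rw [max_eq_left h0, max_eq_left hz, max_eq_left (by linarith : (0:ℝ) ≤ z - w0)]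
      rw [sub_zero, max_eq_left (by norm_num : (0:ℝ) ≤ 1)]
      field_simp
      ring
    · rcases le_total z w0 with hzw | hzw
      · have h1 : 1 ≤ z / w0 := by rw [le_div_iff_of_neg hneg]; linarith
        rw [max_eq_right (by linarith : (0:ℝ) ≤ z / w0), max_eq_right hz,
          max_eq_right (by linarith : z - w0 ≤ 0),
          max_eq_right (by linarith : 1 - z / w0 ≤ 0)]
        try simp
      · have h0 : 0 ≤ z / w0 := by rw [le_div_iff_of_neg hneg]; linarith
        have h1 : z / w0 ≤ 1 := by rw [div_le_one_of_neg hneg]; linarith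
        rw [max_eq_right h0, max_eq_right hz, max_eq_left (by linarith : (0:ℝ) ≤ z - w0),
          max_eq_left (by linarith : (0:ℝ) ≤ 1 - z / w0)]
        field_simp
        ring
  · have hset : {t : ℝ | w0 * t ≤ z} ∩ Set.Icc 0 1 = Set.Icc 0 (min 1 (z / w0)) := by
      have h1 : {t : ℝ | w0 * t ≤ z} = Set.Iic (z / w0) := by
        ext t; simp only [Set.mem_setOf_eq, Set.mem_Iic]
        rw [le_div_iff₀ hpos, mul_comm]
      rw [h1, ← Set.Ici_inter_Iic, Set.inter_comm, Set.inter_assoc, Set.Iic_inter_Iic,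
        Set.Ici_inter_Iic]
    rw [hset, Real.volume_Icc, ENNReal.toReal_ofReal', sub_zero]
    rcases le_total z 0 with hz | hz
    · have h0 : z / w0 ≤ 0 := div_nonpos_of_nonpos_of_nonneg hz hpos.le
      rw [min_eq_right (by linarith : z / w0 ≤ 1), max_eq_right h0, max_eq_right hz,
        max_eq_right (by linarith : z - w0 ≤ 0)]
      simp
    · rcases le_total z w0 with hzw | hzw
      · have h1 : z / w0 ≤ 1 := by rw [div_le_one hpos]; linarith
        have h0 : 0 ≤ z / w0 := div_nonneg hz hpos.le
        rw [min_eq_right h1, max_eq_left h0, max_eq_left hz,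
          max_eq_right (by linarith : z - w0 ≤ 0)]
        field_simp
        ring
      · have h1 : 1 ≤ z / w0 := by rw [le_div_iff₀ hpos]; linarith
        rw [min_eq_left h1, max_eq_left (by norm_num : (0:ℝ) ≤ 1), max_eq_left hz,
          max_eq_left (by linarith : (0:ℝ) ≤ z - w0)]
        field_simp
        ring

lemma base_case (w : Fin 1 → ℝ) (hw : ∀ i, w i ≠ 0) (z : ℝ) :
    (volume ({x : Fin 1 → ℝ | ∑ i, w i * x i ≤ z} ∩ Set.Icc 0 1)).toReal =
      (1 / (((1 : ℕ).factorial : ℝ) * ∏ i, w i)) *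
        ∑ K : Finset (Fin 1), (-1:ℝ) ^ K.card * (max (z - ∑ i ∈ K, w i) 0) ^ 1 := by
  have hA : MeasurableSet ({t : ℝ | w 0 * t ≤ z} ∩ Set.Icc 0 1) := by
    apply MeasurableSet.inter
    · exact measurableSet_le (measurable_const.mul measurable_id) measurable_const
    · exact measurableSet_Icc
  have hpre : (MeasurableEquiv.funUnique (Fin 1) ℝ) ⁻¹' ({t : ℝ | w 0 * t ≤ z} ∩ Set.Icc 0 1)
      = {x : Fin 1 → ℝ | ∑ i, w i * x i ≤ z} ∩ Set.Icc 0 1 := by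
    ext x
    simp only [Set.mem_preimage, Set.mem_inter_iff, Set.mem_setOf_eq, Set.mem_Icc,
      MeasurableEquiv.funUnique_apply, Fin.sum_univ_one]
    constructor
    · rintro ⟨h1, h2, h3⟩
      refine ⟨h1, ?_, ?_⟩ <;> intro i <;> simp only [Fin.eq_zero i] <;> assumption
    · rintro ⟨h1, h2, h3⟩
      exact ⟨h1, h2 0, h3 0⟩
  have := (volume_preserving_funUnique (Fin 1) ℝ).measure_preimage hA.nullMeasurableSet
  rw [hpre] at this
  erw [this, base_real (w 0) z (hw 0)]
  have huniv : (univ : Finset (Finset (Fin 1))) = {∅, {0}} := by decide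
  rw [huniv, Finset.sum_pair (by decide : (∅ : Finset (Fin 1)) ≠ {0})]
  simp only [Finset.card_empty, Finset.sum_empty, Finset.card_singleton,
    Finset.sum_singleton, pow_zero, pow_one, Nat.factorial_one, Nat.cast_one,
    Fin.prod_univ_one, sub_zero, one_mul]
  field_simp
  ring

lemma step_case (m : ℕ)
    (ih : ∀ (w : Fin (m + 1) → ℝ), (∀ i, w i ≠ 0) → ∀ z : ℝ,
      (volume ({x : Fin (m + 1) → ℝ | ∑ i, w i * x i ≤ z} ∩ Set.Icc 0 1)).toReal =
        (1 / (((m + 1).factorial : ℝ) * ∏ i, w i)) *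
          ∑ K : Finset (Fin (m + 1)), (-1:ℝ) ^ K.card * (max (z - ∑ i ∈ K, w i) 0) ^ (m + 1))
    (w : Fin (m + 2) → ℝ) (hw : ∀ i, w i ≠ 0) (z : ℝ) :
    (volume ({x : Fin (m + 2) → ℝ | ∑ i, w i * x i ≤ z} ∩ Set.Icc 0 1)).toReal =
      (1 / (((m + 2).factorial : ℝ) * ∏ i, w i)) *
        ∑ K : Finset (Fin (m + 2)), (-1:ℝ) ^ K.card * (max (z - ∑ i ∈ K, w i) 0) ^ (m + 2) := by
  set i : Fin (m + 2) := Fin.last (m + 1) with hi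
  set w' : Fin (m + 1) → ℝ := fun j => w j.castSucc with hw'def
  have hw' : ∀ j, w' j ≠ 0 := fun j => hw _
  set S : Set (Fin (m + 2) → ℝ) := {x | ∑ j, w j * x j ≤ z} ∩ Set.Icc 0 1 with hSdef
  have hS : MeasurableSet S := by
    apply MeasurableSet.inter
    · exact measurableSet_le (Finset.measurable_sum univ
        (fun j _ => measurable_const.mul (measurable_pi_apply j))) measurable_const
    · exact measurableSet_Icc
  set S' : ℝ → Set (Fin (m + 1) → ℝ) :=
    fun c => {y | ∑ j, w' j * y j ≤ c} ∩ Set.Icc 0 1 with hS'def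
  set e := MeasurableEquiv.piFinSuccAbove (fun _ : Fin (m + 2) => ℝ) i with he
  -- volume S via the product
  have hpres := ((volume_preserving_piFinSuccAbove (fun _ : Fin (m + 2) => ℝ) i).symm
    e).measure_preimage hS.nullMeasurableSet
  -- hpres : volume (e.symm ⁻¹' S) = volume S
  have hslice : ∀ t : ℝ, Prod.mk t ⁻¹' (⇑e.symm ⁻¹' S) =
      if t ∈ Set.Icc (0:ℝ) 1 then S' (z - w i * t) else ∅ := by
    intro t
    ext y
    have hmem : e.symm (t, y) = i.insertNth t y := by
      rw [MeasurableEquiv.piFinSuccAbove_symm_apply]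
      rfl
    simp only [Set.mem_preimage, hmem, hSdef, Set.mem_inter_iff, Set.mem_setOf_eq]
    have hsum0 : ∑ j : Fin (m + 2), w j * Fin.insertNth (α := fun _ => ℝ) i t y j
        = w i * t + ∑ j : Fin (m + 1), w (i.succAbove j) * y j := by
      rw [Fin.sum_univ_succAbove (fun j => w j * Fin.insertNth (α := fun _ => ℝ) i t y j) i]
      simp only [Fin.insertNth_apply_same, Fin.insertNth_apply_succAbove]
    rw [hsum0, Fin.insertNth_mem_Icc]
    by_cases ht : t ∈ Set.Icc (0:ℝ) 1
    · simp only [if_pos ht, hS'def, Set.mem_inter_iff, Set.mem_setOf_eq]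
      constructor
      · rintro ⟨h1, _, h3⟩
        refine ⟨?_, h3⟩
        · have : ∀ j, w (i.succAbove j) = w' j := by
            intro j; rw [hw'def]; simp [hi, Fin.succAbove_last]
          simp only [this] at h1
          linarith
      · rintro ⟨h1, h3⟩
        have hww : ∀ j, w (i.succAbove j) = w' j := by
          intro j; rw [hw'def]; simp [hi, Fin.succAbove_last]
        simp only [hww]
        exact ⟨by linarith, ht, h3⟩
    · simp only [if_neg ht, Set.mem_empty_iff_false, iff_false]
      rintro ⟨-, ht', -⟩
      exact ht ht'
  have hvol : volume S = ∫⁻ t in Set.Icc (0:ℝ) 1, volume (S' (z - w i * t)) := by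
    rw [← hpres, Measure.volume_eq_prod, Measure.prod_apply (e.symm.measurable hS)]
    rw [← lintegral_indicator measurableSet_Icc]
    congr 1
    ext t
    rw [hslice t]
    by_cases ht : t ∈ Set.Icc (0:ℝ) 1
    · rw [if_pos ht, Set.indicator_of_mem ht]
    · rw [if_neg ht, Set.indicator_of_notMem ht, measure_empty]
  -- the IH packaged
  set g : ℝ → ℝ := fun c => (1 / (((m + 1).factorial : ℝ) * ∏ j, w' j)) *
    ∑ K : Finset (Fin (m + 1)), (-1:ℝ) ^ K.card * (max (c - ∑ j ∈ K, w' j) 0) ^ (m + 1)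
    with hgdef
  have hIH : ∀ c : ℝ, (volume (S' c)).toReal = g c := fun c => ih w' hw' c
  have hfin : ∀ c : ℝ, volume (S' c) ≠ ⊤ := by
    intro c
    apply ne_top_of_le_ne_top _ (measure_mono Set.inter_subset_right)
    rw [Real.volume_Icc_pi]
    simp
  have hofReal : ∀ c : ℝ, volume (S' c) = ENNReal.ofReal (g c) := by
    intro c
    rw [← hIH c, ENNReal.ofReal_toReal (hfin c)]
  have hg0 : ∀ c : ℝ, 0 ≤ g c := by
    intro c; rw [← hIH c]; exact ENNReal.toReal_nonneg
  have hgcont : Continuous g := by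
    rw [hgdef]
    apply Continuous.mul continuous_const
    apply continuous_finset_sum
    intro K _
    exact continuous_const.mul
      (((continuous_id.sub continuous_const).max continuous_const).pow (m + 1))
  have hcont2 : Continuous fun t : ℝ => g (z - w i * t) :=
    hgcont.comp (continuous_const.sub (continuous_const.mul continuous_id))
  have hI : volume S = ENNReal.ofReal (∫ t in Set.Icc (0:ℝ) 1, g (z - w i * t)) := by
    rw [hvol]
    simp only [hofReal]
    rw [← ofReal_integral_eq_lintegral_ofReal (hcont2.integrableOn_Icc)
      (Filter.Eventually.of_forall fun t => hg0 _)]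
  have hInn : 0 ≤ ∫ t in Set.Icc (0:ℝ) 1, g (z - w i * t) :=
    integral_nonneg fun t => hg0 _
  rw [hI, ENNReal.toReal_ofReal hInn]
  -- compute the integral
  rw [MeasureTheory.integral_Icc_eq_integral_Ioc,
    ← intervalIntegral.integral_of_le (by norm_num : (0:ℝ) ≤ 1)]
  simp only [hgdef]
  rw [intervalIntegral.integral_const_mul]
  have hci : ∀ K ∈ (univ : Finset (Finset (Fin (m + 1)))), IntervalIntegrable
      (fun t => (-1:ℝ) ^ K.card * (max (z - w i * t - ∑ j ∈ K, w' j) 0) ^ (m + 1))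
      volume 0 1 := by
    intro K _
    apply Continuous.intervalIntegrable
    apply Continuous.mul continuous_const
    apply Continuous.pow
    apply Continuous.max _ continuous_const
    fun_prop
  rw [intervalIntegral.integral_finset_sum hci]
  have hterm : ∀ K : Finset (Fin (m + 1)),
      (∫ t in (0:ℝ)..1, (-1:ℝ) ^ K.card * (max (z - w i * t - ∑ j ∈ K, w' j) 0) ^ (m + 1)) =
      (-1:ℝ) ^ K.card * (((max (z - ∑ j ∈ K, w' j) 0) ^ (m + 2)
        - (max (z - ∑ j ∈ K, w' j - w i) 0) ^ (m + 2)) / (((m:ℝ) + 2) * w i)) := by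
    intro K
    rw [intervalIntegral.integral_const_mul]
    congr 1
    have harg : ∀ t : ℝ, z - w i * t - ∑ j ∈ K, w' j = (z - ∑ j ∈ K, w' j) - w i * t := by
      intro t; ring
    simp only [harg]
    rw [integral_maxpow (m + 1) (by omega) (w i) (z - ∑ j ∈ K, w' j) (hw i)]
    rw [show m + 1 + 1 = m + 2 by ring]
    push_cast
    ring
  simp only [hterm]
  -- now pure algebra with the reindexed sum
  rw [sum_finset_fin_split (m + 1)
    (fun K => (-1:ℝ) ^ K.card * (max (z - ∑ j ∈ K, w j) 0) ^ (m + 2))]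
  have hlast_not_mem : ∀ K : Finset (Fin (m + 1)),
      Fin.last (m + 1) ∉ K.map Fin.castSuccEmb := by
    intro K h
    obtain ⟨j, -, hj⟩ := mem_map.1 h
    exact absurd hj (Fin.castSucc_lt_last j).ne
  have hcard : ∀ K : Finset (Fin (m + 1)), (K.map Fin.castSuccEmb).card = K.card :=
    fun K => card_map _
  have hsum : ∀ K : Finset (Fin (m + 1)),
      ∑ j ∈ K.map Fin.castSuccEmb, w j = ∑ j ∈ K, w' j := by
    intro K
    rw [Finset.sum_map]
    rfl
  have hprod : (∏ j, w j) = (∏ j, w' j) * w i := Fin.prod_univ_castSucc w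
  have hfact : (((m + 2).factorial : ℝ)) = ((m:ℝ) + 2) * ((m + 1).factorial : ℝ) := by
    rw [Nat.factorial_succ]
    push_cast
    ring
  rw [Finset.mul_sum, Finset.mul_sum]
  apply Finset.sum_congr rfl
  intro K _
  rw [hcard K, hsum K, Finset.card_insert_of_notMem (hlast_not_mem K),
    Finset.sum_insert (hlast_not_mem K), hcard K, hsum K, hprod, hfact]
  have h1 : z - (w i + ∑ j ∈ K, w' j) = z - ∑ j ∈ K, w' j - w i := by ring
  rw [h1, pow_succ (-1:ℝ) K.card]
  have hfne : ((m + 1).factorial : ℝ) ≠ 0 := Nat.cast_ne_zero.2 (Nat.factorial_ne_zero _)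
  have hm2 : ((m:ℝ) + 2) ≠ 0 := by positivity
  have hpne : (∏ j, w' j) ≠ 0 := Finset.prod_ne_zero_iff.2 fun j _ => hw' j
  have hwine : w i ≠ 0 := hw i
  field_simp
  ring

lemma cube_slice : ∀ (n : ℕ) (w : Fin (n + 1) → ℝ), (∀ i, w i ≠ 0) → ∀ z : ℝ,
    (volume ({x : Fin (n + 1) → ℝ | ∑ i, w i * x i ≤ z} ∩ Set.Icc 0 1)).toReal =
      (1 / (((n + 1).factorial : ℝ) * ∏ i, w i)) *
        ∑ K : Finset (Fin (n + 1)), (-1:ℝ) ^ K.card * (max (z - ∑ i ∈ K, w i) 0) ^ (n + 1) := by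
  intro n
  induction n with
  | zero => exact base_case
  | succ m ihm => exact step_case m ihm

/-- The volume of an arbitrary slice of the unit hypercube:
`vol_n(G_{w,z}^n ∩ I^n) = (1/(n! ∏ wᵢ)) ∑_{K ⊆ [n]} (-1)^{|K|} (z - w·1_K)₊^n`. -/
theorem volume_halfspace_inter_unitCube
    (n : ℕ) (hn : 0 < n) (w : Fin n → ℝ) (hw : ∀ i, w i ≠ 0) (z : ℝ) :
    (volume ({x : Fin n → ℝ | ∑ i, w i * x i ≤ z} ∩ Set.Icc 0 1)).toReal =
      (1 / ((n.factorial : ℝ) * ∏ i, w i)) *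
        ∑ K : Finset (Fin n), (-1 : ℝ) ^ K.card * (max (z - ∑ i ∈ K, w i) 0) ^ n := by
  obtain ⟨m, rfl⟩ : ∃ m, n = m + 1 := ⟨n - 1, by omega⟩
  exact cube_slice m w hw z
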